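/- Let M be the 5-element semigroup on {a,b,e,f,0} whose only nonzero products are ea = a, bf = b, ee = e, ff = f (all other products equal 0). In M², the subsemigroup S generated by (a,f) and (e,b) has the property that the only elements of S with both coordinates nonzero are (a,f), (e,b), and (a,b); the set I of elements of S having a zero coordinate is an ideal of S; and the Rees quotient S/I is 3-nilpotent but not 2-nilpotent. -/

import Mathlib

/-- The 5-element semigroup `M` on `{a,b,e,f,0}` whose only nonzero products are
`ea = a`, `bf = b`, `ee = e`, `ff = f`. -/
inductive M5 : Type
  | a | b | e | f | z
  deriving DecidableEq

instance : Fintype M5 :=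
  ⟨{M5.a, M5.b, M5.e, M5.f, M5.z}, by intro x; cases x <;> decide⟩

def M5.mul : M5 → M5 → M5
  | .e, .a => .a
  | .b, .f => .b
  | .e, .e => .e
  | .f, .f => .f
  | _, _ => .z

instance : Semigroup M5 where
  mul := M5.mul
  mul_assoc := by decide

def inT : M5 × M5 → Bool := fun p =>
  p ∈ [(M5.a, M5.f), (M5.e, M5.b), (M5.z, M5.f), (M5.e, M5.z),
    (M5.a, M5.b), (M5.z, M5.z), (M5.a, M5.z), (M5.z, M5.b)]

def T : Subsemigroup (M5 × M5) where
  carrier := {p | inT p = true}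
  mul_mem' := by decide

/-- In `M²`, the subsemigroup `S` generated by `(a,f)` and `(e,b)` has the property that
its only elements with both coordinates nonzero are `(a,f)`, `(e,b)` and `(a,b)`; the
set `I` of elements of `S` having a zero coordinate is an ideal of `S`; and the Rees
quotient `S/I` is 3-nilpotent but not 2-nilpotent. -/
theorem stmt16 :
    let S := Subsemigroup.closure {((M5.a, M5.f) : M5 × M5), (M5.e, M5.b)}
    let I : Set (M5 × M5) := {x | x ∈ S ∧ (x.1 = M5.z ∨ x.2 = M5.z)}
    (∀ x ∈ S, x.1 ≠ M5.z → x.2 ≠ M5.z →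
      x = (M5.a, M5.f) ∨ x = (M5.e, M5.b) ∨ x = (M5.a, M5.b)) ∧
    (∀ s ∈ S, ∀ x ∈ I, s * x ∈ I ∧ x * s ∈ I) ∧
    (∀ x ∈ S, ∀ y ∈ S, ∀ w ∈ S, x * y * w ∈ I) ∧
    (∃ x ∈ S, ∃ y ∈ S, x * y ∉ I) := by
  intro S I
  have g1 : ((M5.a, M5.f) : M5 × M5) ∈ S := Subsemigroup.subset_closure (by simp)
  have g2 : ((M5.e, M5.b) : M5 × M5) ∈ S := Subsemigroup.subset_closure (by simp)
  have hST : S ≤ T := Subsemigroup.closure_le.mpr (by intro x hx; rcases hx with h | h <;> subst h <;> rfl)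
  refine ⟨?_, ?_, ?_, ?_⟩
  · intro x hx h1 h2
    have hT : inT x = true := hST hx
    clear hx
    revert hT h1 h2; revert x; decide
  · intro s hs x hx
    refine ⟨⟨S.mul_mem hs hx.1, ?_⟩, ⟨S.mul_mem hx.1 hs, ?_⟩⟩
    · have h1 : inT s = true := hST hs
      have h2 : inT x = true := hST hx.1
      have h3 := hx.2
      clear hs hx
      revert h1 h2 h3; revert s x; decide
    · have h1 : inT s = true := hST hs
      have h2 : inT x = true := hST hx.1
      have h3 := hx.2
      clear hs hx
      revert h1 h2 h3; revert s x; decide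
  · intro x hx y hy w hw
    refine ⟨S.mul_mem (S.mul_mem hx hy) hw, ?_⟩
    have h1 : inT x = true := hST hx
    have h2 : inT y = true := hST hy
    have h3 : inT w = true := hST hw
    clear hx hy hw
    revert h1 h2 h3; revert x y w; decide
  · refine ⟨_, g2, _, g1, fun h => ?_⟩
    have := h.2
    revert this; decide
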